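/- Let X be a real random variable with mean zero and variance one, Z an independent standard Gaussian, and Y_t = √(1-t²)X + tZ for t < 1. Then Y_t has a density ρ satisfying the pointwise lower bound ρ(x) ≥ C(t) e^{-x²/t²}, where C(t) = (1 - 1/(2(1-t²))) e^{-2/t²} / (√(2π) t). -/

import Mathlib

open MeasureTheory ProbabilityTheory Real
open scoped NNReal ENNReal

lemma gaussianPDFReal_meas_snd (V : ℝ≥0) :
    Measurable (fun p : ℝ × ℝ => gaussianPDFReal p.2 V p.1) := by
  unfold gaussianPDFReal
  fun_prop

lemma gaussianPDFReal_integrable_mu (μ : Measure ℝ) [IsProbabilityMeasure μ] (V : ℝ≥0)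
    (x : ℝ) : Integrable (fun y => gaussianPDFReal y V x) μ := by
  refine (integrable_const ((Real.sqrt (2 * π * V))⁻¹)).mono'
    ((gaussianPDFReal_meas_snd V).comp measurable_prodMk_left).aestronglyMeasurable
    (ae_of_all _ fun y => ?_)
  rw [Real.norm_eq_abs, abs_of_nonneg (gaussianPDFReal_nonneg _ _ _)]
  unfold gaussianPDFReal
  have h1 : Real.exp (-(x - y) ^ 2 / (2 * V)) ≤ 1 := by
    apply Real.exp_le_one_iff.mpr
    apply div_nonpos_of_nonpos_of_nonneg (neg_nonpos.mpr (sq_nonneg _))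
    positivity
  have h2 : (0:ℝ) ≤ (Real.sqrt (2 * π * V))⁻¹ := by positivity
  nlinarith

lemma conv_density (μ : Measure ℝ) [IsProbabilityMeasure μ] (V : ℝ≥0) (hV : V ≠ 0) :
    Measure.map (fun p : ℝ × ℝ => p.1 + p.2) (μ.prod (gaussianReal 0 V))
      = volume.withDensity (fun x => ENNReal.ofReal (∫ y, gaussianPDFReal y V x ∂μ)) := by
  have hkey : ∀ x : ℝ, ENNReal.ofReal (∫ y, gaussianPDFReal y V x ∂μ)
      = ∫⁻ y, gaussianPDF y V x ∂μ := by
    intro x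
    rw [ofReal_integral_eq_lintegral_ofReal (gaussianPDFReal_integrable_mu μ V x)
      (ae_of_all _ fun y => gaussianPDFReal_nonneg _ _ _)]
    rfl
  ext s hs
  rw [Measure.map_apply measurable_add hs, withDensity_apply _ hs,
    Measure.prod_apply (measurable_add hs)]
  have hfib : ∀ y : ℝ, (gaussianReal 0 V) (Prod.mk y ⁻¹' ((fun p : ℝ × ℝ => p.1 + p.2) ⁻¹' s))
      = ∫⁻ x in s, gaussianPDF y V x := by
    intro y
    have : Prod.mk y ⁻¹' ((fun p : ℝ × ℝ => p.1 + p.2) ⁻¹' s) = (fun z => y + z) ⁻¹' s := rfl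
    rw [this, ← Measure.map_apply (measurable_const_add y) hs, gaussianReal_map_const_add,
      zero_add, gaussianReal_apply _ hV]
  simp_rw [hfib, hkey]
  rw [lintegral_lintegral_swap]
  exact ((ENNReal.measurable_ofReal.comp (gaussianPDFReal_meas_snd V)).comp
    measurable_swap).aemeasurable

/-- Density lower bound after Gaussian smoothing: if `X` has mean 0 and variance 1, `Z` is
an independent standard Gaussian and `Y_t = √(1-t²)X + tZ` with `0 < t < 1`, then `Y_t`
has a density `ρ` with `ρ(x) ≥ C(t) e^{-x²/t²}`, where
`C(t) = (1 - 1/(2(1-t²))) e^{-2/t²} / (√(2π) t)`. -/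
theorem density_lower_bound
    {Ω : Type*} [MeasureSpace Ω] [IsProbabilityMeasure (ℙ : Measure Ω)]
    (X Z : Ω → ℝ) (t : ℝ) (ht : 0 < t) (ht1 : t < 1)
    (hXmeas : Measurable X)
    (hZ : Measure.map Z ℙ = gaussianReal 0 1)
    (hindep : IndepFun X Z ℙ)
    (hmean : ∫ ω, X ω = 0) (hvar : ∫ ω, X ω ^ 2 = 1) :
    ∃ ρ : ℝ → ℝ,
      Measure.map (fun ω => Real.sqrt (1 - t ^ 2) * X ω + t * Z ω) ℙ
        = volume.withDensity (fun x => ENNReal.ofReal (ρ x))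
      ∧ ∀ x : ℝ,
          ρ x ≥ ((1 - 1 / (2 * (1 - t ^ 2))) * Real.exp (-2 / t ^ 2)
                  / (Real.sqrt (2 * Real.pi) * t)) * Real.exp (-x ^ 2 / t ^ 2) := by

  have ht2 : (0:ℝ) < 1 - t ^ 2 := by nlinarith
  set a : ℝ := Real.sqrt (1 - t ^ 2) with ha_def
  have ha : 0 < a := Real.sqrt_pos.mpr ht2
  have ha2 : a ^ 2 = 1 - t ^ 2 := Real.sq_sqrt ht2.le
  set V : ℝ≥0 := ⟨t ^ 2, sq_nonneg t⟩ with hV_def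
  have hVr : (V : ℝ) = t ^ 2 := rfl
  have hVne : V ≠ 0 := by
    intro h
    have h2 : (V : ℝ) = 0 := by rw [h]; rfl
    rw [hVr] at h2
    nlinarith
  have hZmeas : AEMeasurable Z ℙ := by
    refine aemeasurable_of_map_neZero ?_
    rw [hZ]
    infer_instance
  have hXa : AEMeasurable (fun ω => a * X ω) ℙ := (hXmeas.const_mul a).aemeasurable
  have hZt : AEMeasurable (fun ω => t * Z ω) ℙ := hZmeas.const_mul t
  set μ : Measure ℝ := Measure.map (fun ω => a * X ω) ℙ with hμ_def
  have hμprob : IsProbabilityMeasure μ := Measure.isProbabilityMeasure_map hXa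
  have hν : Measure.map (fun ω => t * Z ω) ℙ = gaussianReal 0 V := by
    have h1 : Measure.map (fun ω => t * Z ω) ℙ = Measure.map (t * ·) (Measure.map Z ℙ) :=
      (AEMeasurable.map_map_of_aemeasurable (measurable_const_mul t).aemeasurable hZmeas).symm
    rw [h1, hZ, gaussianReal_map_const_mul, mul_zero, mul_one]
    rfl
  have hindep' : IndepFun (fun ω => a * X ω) (fun ω => t * Z ω) ℙ :=
    hindep.comp (measurable_const_mul a) (measurable_const_mul t)
  have hpair : Measure.map (fun ω => (a * X ω, t * Z ω)) ℙ = μ.prod (gaussianReal 0 V) := by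
    rw [← hν, hμ_def]
    exact (indepFun_iff_map_prod_eq_prod_map_map hXa hZt).mp hindep'
  have hmap : Measure.map (fun ω => a * X ω + t * Z ω) ℙ
      = Measure.map (fun p : ℝ × ℝ => p.1 + p.2) (μ.prod (gaussianReal 0 V)) := by
    rw [← hpair]
    exact (AEMeasurable.map_map_of_aemeasurable measurable_add.aemeasurable
      (hXa.prodMk hZt)).symm
  refine ⟨fun x => ∫ y, gaussianPDFReal y V x ∂μ, ?_, ?_⟩
  · rw [hmap, conv_density μ V hVne]
  · intro x
    -- integrability of X^2
    have hX2 : Integrable (fun ω => X ω ^ 2) ℙ := by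
      by_contra h
      rw [integral_undef h] at hvar
      norm_num at hvar
    have hy2int : Integrable (fun y : ℝ => y ^ 2) μ := by
      rw [hμ_def, integrable_map_measure (by fun_prop) hXa]
      have : ((fun y : ℝ => y ^ 2) ∘ fun ω => a * X ω) = fun ω => a ^ 2 * X ω ^ 2 := by
        ext ω; simp [Function.comp, mul_pow]
      rw [this]
      exact hX2.const_mul _
    have hy2val : ∫ y, y ^ 2 ∂μ = 1 - t ^ 2 := by
      rw [hμ_def, integral_map hXa (by fun_prop)]
      have : (fun ω => (a * X ω) ^ 2) = fun ω => a ^ 2 * X ω ^ 2 := by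
        ext ω; ring
      rw [this, integral_const_mul, hvar, mul_one, ha2]
    set c : ℝ := Real.exp (-(x ^ 2 + 2) / t ^ 2) / (Real.sqrt (2 * π) * t) with hc_def
    have hc : 0 < c := by positivity
    have hpt : ∀ y : ℝ, c * (1 - y ^ 2 / 2) ≤ gaussianPDFReal y V x := by
      intro y
      by_cases hy : y ^ 2 ≤ 2
      · have hpdf : c ≤ gaussianPDFReal y V x := by
          unfold gaussianPDFReal
          have hs : Real.sqrt (2 * π * (V : ℝ)) = Real.sqrt (2 * π) * t := by
            rw [hVr, Real.sqrt_mul (by positivity) (t ^ 2), Real.sqrt_sq ht.le]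
          rw [hs, hVr, hc_def, div_eq_inv_mul]
          apply mul_le_mul_of_nonneg_left _ (by positivity)
          apply Real.exp_le_exp.mpr
          rw [div_le_div_iff₀ (by positivity) (by positivity)]
          nlinarith [sq_nonneg (x + y), sq_nonneg (x - y)]
        nlinarith [sq_nonneg y]
      · have h1 : 1 - y ^ 2 / 2 ≤ 0 := by nlinarith
        have h2 := gaussianPDFReal_nonneg y V x
        nlinarith
    have hhint : Integrable (fun y : ℝ => c * (1 - y ^ 2 / 2)) μ :=
      (((integrable_const (1:ℝ)).sub (hy2int.div_const 2)).const_mul c)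
    have hmono : ∫ y, c * (1 - y ^ 2 / 2) ∂μ ≤ ∫ y, gaussianPDFReal y V x ∂μ :=
      integral_mono hhint (gaussianPDFReal_integrable_mu μ V x) hpt
    have hval : ∫ y, c * (1 - y ^ 2 / 2) ∂μ = c * (1 - (1 - t ^ 2) / 2) := by
      rw [integral_const_mul, integral_sub (integrable_const 1) (hy2int.div_const 2),
        integral_div, hy2val, integral_const]
      simp [measure_univ]
    have hexp : Real.exp (-(x ^ 2 + 2) / t ^ 2)
        = Real.exp (-2 / t ^ 2) * Real.exp (-x ^ 2 / t ^ 2) := by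
      rw [← Real.exp_add]
      congr 1
      field_simp
      ring
    have hu : (1:ℝ) - 1 / (2 * (1 - t ^ 2)) ≤ 1 - (1 - t ^ 2) / 2 := by
      have h3 : (1 - t ^ 2) / 2 ≤ 1 / (2 * (1 - t ^ 2)) := by
        rw [div_le_div_iff₀ (by norm_num) (by positivity)]
        nlinarith
      linarith
    have hfinal : ((1 - 1 / (2 * (1 - t ^ 2))) * Real.exp (-2 / t ^ 2)
          / (Real.sqrt (2 * Real.pi) * t)) * Real.exp (-x ^ 2 / t ^ 2)
        ≤ c * (1 - (1 - t ^ 2) / 2) := by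
      have hK : (0:ℝ) < Real.exp (-2 / t ^ 2) * Real.exp (-x ^ 2 / t ^ 2)
          / (Real.sqrt (2 * π) * t) := by positivity
      calc ((1 - 1 / (2 * (1 - t ^ 2))) * Real.exp (-2 / t ^ 2)
            / (Real.sqrt (2 * Real.pi) * t)) * Real.exp (-x ^ 2 / t ^ 2)
          = (1 - 1 / (2 * (1 - t ^ 2)))
            * (Real.exp (-2 / t ^ 2) * Real.exp (-x ^ 2 / t ^ 2)
              / (Real.sqrt (2 * π) * t)) := by ring
        _ ≤ (1 - (1 - t ^ 2) / 2)
            * (Real.exp (-2 / t ^ 2) * Real.exp (-x ^ 2 / t ^ 2)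
              / (Real.sqrt (2 * π) * t)) := mul_le_mul_of_nonneg_right hu hK.le
        _ = c * (1 - (1 - t ^ 2) / 2) := by rw [hc_def, hexp]; ring
    exact le_trans hfinal (hval ▸ hmono)
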